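/- Let G be a connected graph of order n ≥ 2 and H a graph of order at least 2. Then L₂(G∘H) ≥ 2ρ(G), where ρ(G) is the packing number of G and G∘H is the lexicographic product. -/

import Mathlib

open SimpleGraph

/-- The closed neighborhood `N[v]` of a vertex. -/
def closedNbhd {V : Type*} (G : SimpleGraph V) (v : V) : Set V :=
  insert v (G.neighborSet v)

/-- `B` is a `k`-limited packing: every closed neighborhood contains at most `k` vertices of `B`. -/
def IsLimitedPacking {V : Type*} (G : SimpleGraph V) (k : ℕ) (B : Set V) : Prop :=
  ∀ v : V, (B ∩ closedNbhd G v).ncard ≤ k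

/-- The `2`-limited packing number `L₂(G)`: maximum size of a `2`-limited packing. -/
noncomputable def L2 {V : Type*} (G : SimpleGraph V) : ℕ :=
  sSup {n | ∃ B : Set V, IsLimitedPacking G 2 B ∧ B.ncard = n}

/-- The lexicographic product `G ∘ H` of two simple graphs. -/
def lexProd {V W : Type*} (G : SimpleGraph V) (H : SimpleGraph W) : SimpleGraph (V × W) where
  Adj x y := G.Adj x.1 y.1 ∨ (x.1 = y.1 ∧ H.Adj x.2 y.2)
  symm := by
    constructor
    rintro ⟨a, b⟩ ⟨c, d⟩ (h | ⟨h1, h2⟩)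
    · exact Or.inl h.symm
    · exact Or.inr ⟨h1.symm, h2.symm⟩
  loopless := by
    constructor
    rintro ⟨a, b⟩ (h | ⟨h1, h2⟩)
    · exact G.loopless.irrefl a h
    · exact H.loopless.irrefl b h2

/-- `P` is a packing: pairwise disjoint closed neighborhoods. -/
def IsPacking {V : Type*} (G : SimpleGraph V) (P : Set V) : Prop :=
  ∀ u ∈ P, ∀ v ∈ P, u ≠ v → closedNbhd G u ∩ closedNbhd G v = ∅

/-- The packing number `ρ(G)`. -/
noncomputable def packingNumber {V : Type*} (G : SimpleGraph V) : ℕ :=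
  sSup {n | ∃ P : Set V, IsPacking G P ∧ P.ncard = n}

/-- For a connected graph `G` of order `n ≥ 2` and a graph `H` of order at least `2`,
`L₂(G ∘ H) ≥ 2ρ(G)`. -/
theorem L2_lexProd_ge {V W : Type*} [Fintype V] [Fintype W]
    (G : SimpleGraph V) (H : SimpleGraph W)
    (hG : G.Connected) (hn : 2 ≤ Fintype.card V) (hH : 2 ≤ Fintype.card W) :
    2 * packingNumber G ≤ L2 (lexProd G H) := by
  classical
  -- get a maximum packing P
  have hne : (0 : ℕ) ∈ {n | ∃ P : Set V, IsPacking G P ∧ P.ncard = n} :=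
    ⟨∅, fun u hu => absurd hu (Set.notMem_empty u), by simp⟩
  have hbdd : BddAbove {n | ∃ P : Set V, IsPacking G P ∧ P.ncard = n} := by
    refine ⟨Fintype.card V, ?_⟩
    rintro n ⟨P, -, rfl⟩
    simpa [Set.ncard_univ, Nat.card_eq_fintype_card] using
      Set.ncard_le_ncard (Set.subset_univ P) Set.finite_univ
  obtain ⟨P, hP, hPcard⟩ : ∃ P : Set V, IsPacking G P ∧ P.ncard = packingNumber G :=
    Nat.sSup_mem ⟨0, hne⟩ hbdd
  obtain ⟨w1, w2, hw⟩ := Fintype.exists_pair_of_one_lt_card (by omega : 1 < Fintype.card W)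
  set B : Set (V × W) := P ×ˢ {w1, w2} with hB
  have hBlim : IsLimitedPacking (lexProd G H) 2 B := by
    intro x
    obtain ⟨v, w⟩ := x
    by_cases hNE : (B ∩ closedNbhd (lexProd G H) (v, w)).Nonempty
    · obtain ⟨⟨p, u⟩, hpB, hpN⟩ := hNE
      have hpP : p ∈ P := hpB.1
      have key : ∀ q : V, q ∈ P → (∃ u' : W, ((q, u') : V × W) ∈ closedNbhd (lexProd G H) (v, w)) → q = p := by
        intro q hqP ⟨u', hq⟩
        by_contra hqp
        have hfirst : ∀ (r : V) (s : W), ((r, s) : V × W) ∈ closedNbhd (lexProd G H) (v, w) →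
            v ∈ closedNbhd G r := by
          intro r s hr
          rcases hr with h | h
          · left; exact congrArg Prod.fst h.symm
          · rcases h with h | ⟨h1, h2⟩
            · right; exact h.symm
            · left; exact h1
        have hv1 : v ∈ closedNbhd G q := hfirst q u' hq
        have hv2 : v ∈ closedNbhd G p := hfirst p u hpN
        have := hP q hqP p hpP hqp
        have : v ∈ (∅ : Set V) := this ▸ ⟨hv1, hv2⟩
        exact this
      have hsub : B ∩ closedNbhd (lexProd G H) (v, w) ⊆ {(p, w1), (p, w2)} := by
        rintro ⟨q, u'⟩ ⟨hqB, hqN⟩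
        have hq : q = p := key q hqB.1 ⟨u', hqN⟩
        rcases hqB.2 with h | h
        · left; exact Prod.ext hq h
        · right; exact Prod.ext hq (Set.mem_singleton_iff.mp h)
      calc (B ∩ closedNbhd (lexProd G H) (v, w)).ncard
          ≤ ({(p, w1), (p, w2)} : Set (V × W)).ncard :=
            Set.ncard_le_ncard hsub ((Set.finite_singleton _).insert _)
        _ ≤ 2 := by
            refine le_trans (Set.ncard_insert_le _ _) ?_
            simp
    · rw [Set.not_nonempty_iff_eq_empty.mp hNE]
      simp
  have hBcard : B.ncard = 2 * packingNumber G := by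
    have hBeq : B = (fun p => (p, w1)) '' P ∪ (fun p => (p, w2)) '' P := by
      ext ⟨q, u'⟩
      simp only [hB, Set.mem_prod, Set.mem_union, Set.mem_image, Set.mem_insert_iff,
        Set.mem_singleton_iff, Prod.mk.injEq]
      aesop
    have hdisj : Disjoint ((fun p => (p, w1)) '' P) ((fun p => (p, w2)) '' P) := by
      rw [Set.disjoint_left]
      rintro ⟨q, u'⟩ ⟨a, -, ha⟩ ⟨b, -, hb⟩
      have h1 : w1 = u' := congrArg Prod.snd ha
      have h2 : w2 = u' := congrArg Prod.snd hb
      exact hw (h1.trans h2.symm)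
    have hinj1 : Function.Injective (fun p : V => (p, w1)) := fun a b h => congrArg Prod.fst h
    have hinj2 : Function.Injective (fun p : V => (p, w2)) := fun a b h => congrArg Prod.fst h
    rw [hBeq, Set.ncard_union_eq hdisj, Set.ncard_image_of_injective _ hinj1,
      Set.ncard_image_of_injective _ hinj2, hPcard]
    ring
  have hmem : 2 * packingNumber G ∈ {n | ∃ B : Set (V × W), IsLimitedPacking (lexProd G H) 2 B ∧ B.ncard = n} :=
    ⟨B, hBlim, hBcard⟩
  have hbdd2 : BddAbove {n | ∃ B : Set (V × W), IsLimitedPacking (lexProd G H) 2 B ∧ B.ncard = n} := by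
    refine ⟨Fintype.card (V × W), ?_⟩
    rintro n ⟨B', -, rfl⟩
    simpa [Set.ncard_univ, Nat.card_eq_fintype_card] using
      Set.ncard_le_ncard (Set.subset_univ B') Set.finite_univ
  exact le_csSup hbdd2 hmem
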